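/- H_p norm bound of the example function: for f_n = D_{2^{2n+1}} − D_{2^{2n}} on the dyadic group, the maximal function f_n* = sup_k |S_{2^k} f_n| satisfies f_n* = |f_n|·𝟙 (it equals |D_{2^{2n+1}} − D_{2^{2n}}|), and hence ‖f_n*‖_p ≤ c·2^{2n(1−1/p)} for 0 < p ≤ 1; in particular ‖f_n*‖_{1/2} ≤ c·2^{−2n}. -/

import Mathlib

open Finset

/-- The dyadic group `G = (ℤ/2)^ℕ`. -/
abbrev G := ℕ → ZMod 2

/-- Walsh–Paley functions: `w n x = ∏ k, ((-1)^(x k))^(n_k)` for the binary expansion of `n`. -/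
noncomputable def walsh (n : ℕ) (x : G) : ℝ :=
  ∏ k ∈ Finset.range (n + 1), if n.testBit k then (-1 : ℝ) ^ (x k).val else 1

/-- Walsh–Dirichlet kernels `D m = ∑_{k<m} w k`. -/
noncomputable def dirichlet (m : ℕ) (x : G) : ℝ :=
  ∑ k ∈ Finset.range m, walsh k x

/-- Walsh–Fejér kernels `K n = (1/n) ∑_{k<n} D k`. -/
noncomputable def fejer (n : ℕ) (x : G) : ℝ :=
  (1 / (n : ℝ)) * ∑ k ∈ Finset.range n, dirichlet k x

/-- The cylinder set `I_N = {t : t_0 = ⋯ = t_{N-1} = 0}`. -/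
def IN (N : ℕ) : Set G := {t | ∀ j < N, t j = 0}

open MeasureTheory

instance : TopologicalSpace (ZMod 2) := ⊥
instance : DiscreteTopology (ZMod 2) := ⟨rfl⟩
instance : MeasurableSpace G := borel G
instance : BorelSpace G := ⟨rfl⟩

/-- The normalized Haar measure on the compact group `G`. -/
noncomputable def haarG : Measure G :=
  Measure.addHaarMeasure ⟨⟨Set.univ, isCompact_univ⟩, by simp⟩

example : haarG Set.univ = 1 := by
  have := Measure.addHaarMeasure_self (K₀ := (⟨⟨Set.univ, isCompact_univ⟩, by simp⟩ : TopologicalSpace.PositiveCompacts G))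
  simpa [haarG] using this

instance : IsFiniteMeasure haarG := by
  constructor
  rw [show haarG Set.univ = 1 from ?_]
  · exact ENNReal.one_lt_top
  · exact Measure.addHaarMeasure_self ..

instance : haarG.IsAddHaarMeasure := by unfold haarG; infer_instance
example : haarG.IsAddLeftInvariant := by infer_instance

instance : haarG.IsAddHaarMeasure := by unfold haarG; infer_instance
example : haarG.IsAddLeftInvariant := by infer_instance

-- walsh basics
lemma walsh_continuous (n : ℕ) : Continuous (walsh n) := by
  unfold walsh
  refine continuous_finset_prod _ fun k _ => ?_
  by_cases h : n.testBit k
  · simp only [h, if_true]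
    exact (continuous_of_discreteTopology (f := fun z : ZMod 2 => (-1:ℝ)^z.val)).comp (continuous_apply k)
  · simp only [h, if_false]
    exact continuous_const

lemma walsh_integrable (n : ℕ) : Integrable (walsh n) haarG :=
  (walsh_continuous n).integrable_of_hasCompactSupport (HasCompactSupport.of_compactSpace _)

lemma testBit_false_of_le {n k : ℕ} (h : n + 1 ≤ k) : n.testBit k = false := by
  apply Nat.testBit_lt_two_pow
  calc n < 2 ^ n := Nat.lt_two_pow_self (n := n)
    _ ≤ 2 ^ k := Nat.pow_le_pow_right (by norm_num) (by omega)

lemma walsh_eq_prod {n N : ℕ} (h : n + 1 ≤ N) (x : G) :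
    walsh n x = ∏ k ∈ Finset.range N, if n.testBit k then (-1 : ℝ) ^ (x k).val else 1 := by
  unfold walsh
  refine Finset.prod_subset (Finset.range_subset_range.2 h) fun k _ hk => ?_
  rw [Finset.mem_range, not_lt] at hk
  simp [testBit_false_of_le hk]

lemma walsh_mul (i j : ℕ) (x : G) : walsh i x * walsh j x = walsh (i ^^^ j) x := by
  set N := 2 ^ (i + j + 1) with hN
  have hpow : ∀ m : ℕ, m ≤ i + j → m + 1 ≤ N := by
    intro m hm
    have h1 : m < 2 ^ m := Nat.lt_two_pow_self (n := m)
    have h2 : (2:ℕ) ^ m ≤ 2 ^ (i + j + 1) := Nat.pow_le_pow_right (by norm_num) (by omega)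
    omega
  have hxor : (i ^^^ j) + 1 ≤ N := by
    have h1 : i < 2 ^ (i + j + 1) := lt_of_le_of_lt (by omega) Nat.lt_two_pow_self
    have h2 : j < 2 ^ (i + j + 1) := lt_of_le_of_lt (by omega) Nat.lt_two_pow_self
    have := Nat.xor_lt_two_pow h1 h2
    omega
  rw [walsh_eq_prod (N := N) (hpow i (by omega)) x, walsh_eq_prod (N := N) (hpow j (by omega)) x,
    walsh_eq_prod (N := N) hxor x, ← Finset.prod_mul_distrib]
  refine Finset.prod_congr rfl fun k _ => ?_
  rcases hb : i.testBit k <;> rcases hc : j.testBit k <;>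
    simp [Nat.testBit_xor, hb, hc, ← pow_add, ← two_mul, pow_mul]

lemma walsh_zero (x : G) : walsh 0 x = 1 := by simp [walsh]

def eG (k : ℕ) : G := fun j => if j = k then 1 else 0

lemma walsh_add_eG {m k : ℕ} (h : m.testBit k = true) (x : G) :
    walsh m (eG k + x) = - walsh m x := by
  have hk : k ∈ Finset.range (m + 1) := by
    rw [Finset.mem_range]
    have h1 : 2 ^ k ≤ m := Nat.ge_two_pow_of_testBit h
    have h2 : k < 2 ^ k := Nat.lt_two_pow_self (n := k)
    omega
  unfold walsh
  rw [← Finset.mul_prod_erase _ _ hk, ← Finset.mul_prod_erase _ _ hk, neg_mul_eq_neg_mul]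
  congr 1
  · simp only [h, if_true]
    show (-1:ℝ) ^ ((eG k + x) k).val = -(-1:ℝ) ^ (x k).val
    have : (eG k + x) k = 1 + x k := by simp [eG]
    rw [this]
    generalize x k = z
    rcases (show z = 0 ∨ z = 1 by revert z; decide) with rfl | rfl <;> norm_num [ZMod.val_one, ZMod.val_zero, show ((2:ZMod 2)).val = 0 from rfl]
  · refine Finset.prod_congr rfl fun j hj => ?_
    have hjk : j ≠ k := (Finset.mem_erase.1 hj).1
    have : (eG k + x) j = x j := by simp [eG, hjk]
    rw [this]

lemma integral_walsh (m : ℕ) : ∫ y, walsh m y ∂haarG = if m = 0 then 1 else 0 := by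
  rcases eq_or_ne m 0 with rfl | hm
  · simp only [if_true]
    simp only [walsh_zero]
    rw [integral_const, smul_eq_mul, mul_one]
    rw [measureReal_def, show haarG Set.univ = 1 from Measure.addHaarMeasure_self ..]
    simp
  · simp only [hm, if_false]
    obtain ⟨k, hk, -⟩ := Nat.exists_most_significant_bit hm
    have h1 : ∫ y, walsh m (eG k + y) ∂haarG = ∫ y, walsh m y ∂haarG :=
      integral_add_left_eq_self (walsh m) (eG k)
    have h2 : ∫ y, walsh m (eG k + y) ∂haarG = - ∫ y, walsh m y ∂haarG := by
      rw [← integral_neg]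
      exact integral_congr_ae (Filter.Eventually.of_forall fun y => walsh_add_eG hk y)
    linarith [h1.symm.trans h2]

lemma integral_walsh_mul (i j : ℕ) :
    ∫ y, walsh i y * walsh j y ∂haarG = if i = j then 1 else 0 := by
  have : ∀ y, walsh i y * walsh j y = walsh (i ^^^ j) y := fun y => walsh_mul i j y
  rw [integral_congr_ae (Filter.Eventually.of_forall this), integral_walsh]
  have hx : i ^^^ j = 0 ↔ i = j := ⟨fun h => by
    have := congrArg (· ^^^ j) h; simpa [Nat.xor_assoc] using this, fun h => by subst h; exact Nat.xor_self _⟩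
  simp [hx]

lemma xor_two_pow {m i : ℕ} (h : i < 2 ^ m) : 2 ^ m ^^^ i = 2 ^ m + i := by
  apply Nat.eq_of_testBit_eq
  intro k
  rcases lt_trichotomy k m with hk | rfl | hk
  · rw [Nat.testBit_xor, Nat.testBit_two_pow_of_ne (by omega), Nat.testBit_two_pow_add_gt hk]
    simp
  · rw [Nat.testBit_xor, Nat.testBit_two_pow_self, Nat.testBit_two_pow_add_eq,
      Nat.testBit_lt_two_pow h]
    simp
  · have h1 : 2 ^ m + i < 2 ^ k := by
      have : 2 ^ (m + 1) ≤ 2 ^ k := Nat.pow_le_pow_right (by norm_num) (by omega)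
      have := Nat.pow_lt_pow_right (a := 2) (by norm_num) hk
      omega
    rw [Nat.testBit_xor, Nat.testBit_two_pow_of_ne (by omega),
      Nat.testBit_lt_two_pow h1, Nat.testBit_lt_two_pow (by omega : i < 2 ^ k)]
    rfl

lemma walsh_two_pow (m : ℕ) (x : G) : walsh (2 ^ m) x = (-1 : ℝ) ^ (x m).val := by
  unfold walsh
  rw [Finset.prod_eq_single m]
  · simp [Nat.testBit_two_pow_self]
  · intro j _ hj
    simp [Nat.testBit_two_pow_of_ne (Ne.symm hj)]
  · intro hm
    exact absurd (Finset.mem_range.2 (by have := Nat.lt_two_pow_self (n := m); omega)) hm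

lemma dirichlet_two_pow_succ (m : ℕ) (x : G) :
    dirichlet (2 ^ (m + 1)) x = (1 + (-1 : ℝ) ^ (x m).val) * dirichlet (2 ^ m) x := by
  unfold dirichlet
  have hsplit : Finset.range (2 ^ (m + 1)) =
      Finset.range (2 ^ m) ∪ Finset.Ico (2 ^ m) (2 ^ (m + 1)) := by
    rw [Finset.range_eq_Ico, Finset.range_eq_Ico]
    rw [Finset.Ico_union_Ico_eq_Ico (Nat.zero_le _) (Nat.pow_le_pow_right (by norm_num) (by omega))]
  rw [hsplit, Finset.sum_union]
  · have h2 : ∑ k ∈ Finset.Ico (2 ^ m) (2 ^ (m + 1)), walsh k x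
        = (-1 : ℝ) ^ (x m).val * ∑ k ∈ Finset.range (2 ^ m), walsh k x := by
      rw [Finset.mul_sum, Finset.sum_Ico_eq_sum_range]
      have h3 : 2 ^ (m + 1) - 2 ^ m = 2 ^ m := by
        rw [pow_succ]; omega
      rw [h3]
      refine Finset.sum_congr rfl fun i hi => ?_
      rw [Finset.mem_range] at hi
      rw [← walsh_two_pow m x, walsh_mul, xor_two_pow hi]
    rw [h2]; ring
  · rw [Finset.range_eq_Ico]
    exact Finset.Ico_disjoint_Ico_consecutive _ _ _

lemma mem_IN_succ {m : ℕ} {x : G} : x ∈ IN (m + 1) ↔ x ∈ IN m ∧ x m = 0 := by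
  constructor
  · intro h; exact ⟨fun j hj => h j (by omega), h m (by omega)⟩
  · rintro ⟨h1, h2⟩ j hj
    rcases Nat.lt_succ_iff_lt_or_eq.1 hj with hj' | rfl
    · exact h1 j hj'
    · exact h2

open scoped Classical in
lemma dirichlet_two_pow (m : ℕ) (x : G) :
    dirichlet (2 ^ m) x = if x ∈ IN m then (2 : ℝ) ^ m else 0 := by
  induction m with
  | zero =>
    have : x ∈ IN 0 := fun j hj => by omega
    simp [this, dirichlet, walsh_zero]
  | succ m ih =>
    rw [dirichlet_two_pow_succ, ih]
    by_cases h1 : x ∈ IN m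
    · by_cases h2 : x m = 0
      · have : x ∈ IN (m + 1) := mem_IN_succ.2 ⟨h1, h2⟩
        simp only [h1, this, if_true, h2]
        norm_num [ZMod.val_zero]
        ring
      · have h3 : x m = 1 := by
          generalize hz : x m = z at h2 ⊢
          rcases (by decide : ∀ w : ZMod 2, w = 0 ∨ w = 1) z with rfl | rfl <;> simp_all
        have : x ∉ IN (m + 1) := fun h => h2 (mem_IN_succ.1 h).2
        simp [h1, this, h3, ZMod.val_one]
    · have : x ∉ IN (m + 1) := fun h => h1 (mem_IN_succ.1 h).1
      simp [h1, this]


lemma zmod2_cases (z : ZMod 2) : z = 0 ∨ z = 1 := by revert z; decide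

lemma eG_apply (k j : ℕ) (x : G) : (eG k + x) j = (if j = k then 1 else 0) + x j := rfl

lemma measurableSet_IN (m : ℕ) : MeasurableSet (IN m) := by
  have : IN m = ⋂ j ∈ Finset.range m, {x : G | x j = 0} := by
    ext x
    simp only [Set.mem_iInter, Finset.mem_range, Set.mem_setOf_eq]
    exact Iff.rfl
  rw [this]
  refine MeasurableSet.biInter (Finset.range m).countable_toSet fun j _ => ?_
  exact (isClosed_singleton.preimage (continuous_apply j)).measurableSet

lemma haarG_IN (m : ℕ) : haarG (IN m) = (2 : ENNReal)⁻¹ ^ m := by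
  induction m with
  | zero =>
    have : IN 0 = Set.univ := by
      ext x; simp only [Set.mem_univ, iff_true]; intro j hj; omega
    rw [this, show haarG Set.univ = 1 from Measure.addHaarMeasure_self ..]
    simp
  | succ m ih =>
    have hB : ((eG m + ·) ⁻¹' IN (m + 1)) = {x : G | x ∈ IN m ∧ x m = 1} := by
      ext x
      simp only [Set.mem_preimage, Set.mem_setOf_eq]
      constructor
      · intro h
        refine ⟨fun j hj => ?_, ?_⟩
        · have hh := h j (by omega)
          rw [eG_apply, if_neg (by omega : j ≠ m), zero_add] at hh
          exact hh
        · have hh := h m (by omega)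
          rw [eG_apply, if_pos rfl] at hh
          rcases zmod2_cases (x m) with h0 | h1
          · rw [h0] at hh; exact absurd hh (by decide)
          · exact h1
      · rintro ⟨h1, h2⟩ j hj
        rcases Nat.lt_succ_iff_lt_or_eq.1 hj with hj' | rfl
        · rw [eG_apply, if_neg (by omega : j ≠ m), zero_add]
          exact h1 j hj'
        · rw [eG_apply, if_pos rfl, h2]
          decide
    have hunion : IN m = IN (m + 1) ∪ ((eG m + ·) ⁻¹' IN (m + 1)) := by
      rw [hB]
      ext x
      simp only [Set.mem_union, Set.mem_setOf_eq]
      constructor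
      · intro h
        rcases zmod2_cases (x m) with h2 | h2
        · exact Or.inl (mem_IN_succ.2 ⟨h, h2⟩)
        · exact Or.inr ⟨h, h2⟩
      · rintro (h | h)
        · exact (mem_IN_succ.1 h).1
        · exact h.1
    have hdisj : Disjoint (IN (m + 1)) ((eG m + ·) ⁻¹' IN (m + 1)) := by
      rw [hB, Set.disjoint_left]
      intro x hx hx'
      have h0 := (mem_IN_succ.1 hx).2
      have h1 := hx'.2
      rw [h0] at h1
      exact absurd h1 (by decide)
    have hBmeas : MeasurableSet ((eG m + ·) ⁻¹' IN (m + 1)) := by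
      rw [hB]
      have : {x : G | x ∈ IN m ∧ x m = 1} = IN m ∩ {x : G | x m = 1} := rfl
      rw [this]
      exact (measurableSet_IN m).inter
        ((isClosed_singleton.preimage (continuous_apply m)).measurableSet)
    have hmeasB : haarG ((eG m + ·) ⁻¹' IN (m + 1)) = haarG (IN (m + 1)) :=
      measure_preimage_add haarG (eG m) (IN (m + 1))
    have key : haarG (IN m) = 2 * haarG (IN (m + 1)) := by
      rw [hunion, measure_union hdisj hBmeas, hmeasB, two_mul]
    rw [ih] at key
    have h2 : (2 : ENNReal)⁻¹ ^ m = 2 * (2 : ENNReal)⁻¹ ^ (m + 1) := by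
      rw [pow_succ', ← mul_assoc, ENNReal.mul_inv_cancel (by norm_num) (by norm_num), one_mul]
    rw [h2] at key
    exact ((ENNReal.mul_right_inj (by norm_num) (by norm_num)).1 key).symm

/-- **`H_p`-norm bound for the example function** `f_n = D_{2^{2n+1}} − D_{2^{2n}}`:
the maximal function `f_n* = sup_k |S_{2^k} f_n|` equals `|f_n|` pointwise, and there is
a constant `c > 0` with `‖f_n*‖_p ≤ c · 2^{2n(1−1/p)}` for all `0 < p ≤ 1`; in particular
`‖f_n*‖_{1/2} ≤ c · 2^{−2n}`. -/
theorem example_martingale_hardy_norm :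
    ∃ c : ℝ, 0 < c ∧ ∀ (n : ℕ) (f : G → ℝ),
      (∀ y, f y = dirichlet (2 ^ (2 * n + 1)) y - dirichlet (2 ^ (2 * n)) y) →
      ∀ (fhat : ℕ → ℝ), (∀ i, fhat i = ∫ y, f y * walsh i y ∂haarG) →
      ∀ (S : ℕ → G → ℝ), (∀ j y, S j y = ∑ k ∈ Finset.range j, fhat k * walsh k y) →
      (∀ x, (⨆ k : ℕ, |S (2 ^ k) x|) = |f x|) ∧
      (∀ p : ℝ, 0 < p → p ≤ 1 →
        eLpNorm (fun x => ⨆ k : ℕ, |S (2 ^ k) x|) (ENNReal.ofReal p) haarG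
          ≤ ENNReal.ofReal (c * (2 : ℝ) ^ ((2 * n : ℝ) * (1 - 1 / p)))) ∧
      eLpNorm (fun x => ⨆ k : ℕ, |S (2 ^ k) x|) (ENNReal.ofReal (1 / 2)) haarG
        ≤ ENNReal.ofReal (c * (2 : ℝ) ^ (-(2 * n : ℝ))) := by
  classical
  refine ⟨1, one_pos, fun n f hf fhat hfhat S hS => ?_⟩
  set a : ℕ := 2 ^ (2 * n) with ha
  set b : ℕ := 2 ^ (2 * n + 1) with hb
  have hab : a ≤ b := Nat.pow_le_pow_right (by norm_num) (by omega)
  -- f as a sum of Walsh functions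
  have hfsum : ∀ y, f y = ∑ k ∈ Finset.Ico a b, walsh k y := by
    intro y
    rw [hf y]
    unfold dirichlet
    rw [Finset.sum_Ico_eq_sub _ hab]
  -- Fourier coefficients
  have hfhat' : ∀ i, fhat i = if i ∈ Finset.Ico a b then 1 else 0 := by
    intro i
    rw [hfhat i]
    have h1 : ∀ y, f y * walsh i y = ∑ k ∈ Finset.Ico a b, walsh k y * walsh i y := by
      intro y
      rw [hfsum y, Finset.sum_mul]
    rw [integral_congr_ae (Filter.Eventually.of_forall h1),
      integral_finset_sum _ fun k _ => (walsh_integrable (k ^^^ i)).congr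
        (Filter.Eventually.of_forall fun y => (walsh_mul k i y).symm)]
    simp_rw [integral_walsh_mul]
    simp
  -- partial sums at powers 2^k
  have hSlow : ∀ k : ℕ, k ≤ 2 * n → ∀ x, S (2 ^ k) x = 0 := by
    intro k hk x
    rw [hS]
    refine Finset.sum_eq_zero fun j hj => ?_
    rw [Finset.mem_range] at hj
    have hja : j < a := lt_of_lt_of_le hj (Nat.pow_le_pow_right (by norm_num) hk)
    rw [hfhat' j, if_neg (by simp [Finset.mem_Ico]; omega), zero_mul]
  have hShigh : ∀ k : ℕ, 2 * n + 1 ≤ k → ∀ x, S (2 ^ k) x = f x := by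
    intro k hk x
    rw [hS, hfsum x]
    have hsub : Finset.Ico a b ⊆ Finset.range (2 ^ k) := by
      intro j hj
      rw [Finset.mem_Ico] at hj
      rw [Finset.mem_range]
      exact lt_of_lt_of_le hj.2 (Nat.pow_le_pow_right (by norm_num) hk)
    rw [← Finset.sum_subset hsub]
    · refine Finset.sum_congr rfl fun j hj => ?_
      rw [hfhat' j, if_pos hj, one_mul]
    · intro j _ hj
      rw [hfhat' j, if_neg hj, zero_mul]
  -- the maximal function equals |f|
  have hsup : ∀ x, (⨆ k : ℕ, |S (2 ^ k) x|) = |f x| := by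
    intro x
    have hle : ∀ k : ℕ, |S (2 ^ k) x| ≤ |f x| := by
      intro k
      rcases le_or_gt k (2 * n) with hk | hk
      · rw [hSlow k hk x, abs_zero]; exact abs_nonneg _
      · rw [hShigh k (by omega) x]
    refine le_antisymm (ciSup_le hle) ?_
    have hbdd : BddAbove (Set.range fun k : ℕ => |S (2 ^ k) x|) := by
      refine ⟨|f x|, ?_⟩
      rintro y ⟨k, rfl⟩
      exact hle k
    have := le_ciSup hbdd (2 * n + 1)
    rwa [hShigh (2 * n + 1) le_rfl x] at this
  -- |f| is the scaled indicator of IN (2n)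
  have hIN : IN (2 * n + 1) ⊆ IN (2 * n) := fun x hx j hj => hx j (by omega)
  have habs : ∀ x, |f x| = (IN (2 * n)).indicator (fun _ => (2 : ℝ) ^ (2 * n)) x := by
    intro x
    rw [hf x, dirichlet_two_pow, dirichlet_two_pow]
    by_cases h1 : x ∈ IN (2 * n)
    · rw [Set.indicator_of_mem h1]
      by_cases h2 : x ∈ IN (2 * n + 1)
      · rw [if_pos h2, if_pos h1, pow_succ]
        rw [abs_of_nonneg (by nlinarith [pow_pos (two_pos (α := ℝ)) (2 * n)])]
        ring
      · rw [if_neg h2, if_pos h1, zero_sub, abs_neg,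
          abs_of_nonneg (pow_nonneg (by norm_num) _)]
    · have h2 : x ∉ IN (2 * n + 1) := fun h => h1 (hIN h)
      rw [Set.indicator_of_notMem h1, if_neg h2, if_neg h1, sub_zero, abs_zero]
  have hfun : (fun x => ⨆ k : ℕ, |S (2 ^ k) x|)
      = (IN (2 * n)).indicator (fun _ => (2 : ℝ) ^ (2 * n)) := by
    funext x
    rw [hsup x, habs x]
  have hbound : ∀ p : ℝ, 0 < p → p ≤ 1 →
      eLpNorm (fun x => ⨆ k : ℕ, |S (2 ^ k) x|) (ENNReal.ofReal p) haarG
        ≤ ENNReal.ofReal (1 * (2 : ℝ) ^ ((2 * n : ℝ) * (1 - 1 / p))) := by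
    intro p hp hp1
    rw [hfun, eLpNorm_indicator_const₀ (measurableSet_IN (2 * n)).nullMeasurableSet
      (ne_of_gt (ENNReal.ofReal_pos.2 hp)) ENNReal.ofReal_ne_top,
      ENNReal.toReal_ofReal hp.le, haarG_IN]
    have e1 : ‖(2:ℝ) ^ (2 * n)‖ₑ = ENNReal.ofReal ((2:ℝ) ^ (2 * n)) :=
      Real.enorm_eq_ofReal (by positivity)
    have e2 : ((2 : ENNReal)⁻¹) ^ (2 * n) = ENNReal.ofReal (((2:ℝ)⁻¹) ^ (2 * n)) := by
      rw [ENNReal.ofReal_pow (by norm_num)]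
      congr 1
      rw [ENNReal.ofReal_inv_of_pos (by norm_num)]
      norm_num
    have e3 : ENNReal.ofReal (((2:ℝ)⁻¹) ^ (2 * n)) ^ ((1:ℝ) / p)
        = ENNReal.ofReal ((((2:ℝ)⁻¹) ^ (2 * n)) ^ ((1:ℝ) / p)) :=
      ENNReal.ofReal_rpow_of_pos (by positivity)
    rw [e1, e2, e3, ← ENNReal.ofReal_mul (by positivity)]
    apply ENNReal.ofReal_le_ofReal
    rw [one_mul]
    apply le_of_eq
    rw [show ((2:ℝ)⁻¹) = (2:ℝ) ^ (-1 : ℝ) by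
      rw [Real.rpow_neg_one]]
    rw [← Real.rpow_natCast ((2:ℝ) ^ (-1:ℝ)) (2 * n), ← Real.rpow_mul (by norm_num),
      ← Real.rpow_mul (by norm_num), ← Real.rpow_natCast (2:ℝ) (2 * n),
      ← Real.rpow_add (by norm_num)]
    congr 1
    push_cast
    field_simp
    ring
  refine ⟨hsup, hbound, ?_⟩
  have h12 := hbound (1 / 2) (by norm_num) (by norm_num)
  have hexp : ((2 * n : ℝ)) * (1 - 1 / (1 / 2 : ℝ)) = -(2 * n : ℝ) := by
    norm_num
  rw [hexp] at h12
  exact h12
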